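/- (General global convergence, strong Wolfe) Assume Assumptions A1 and A2 hold for x⁰, and consider the conjugate gradient iteration with Σ_{k≥0} 1/‖d^k‖² = +∞. If β_k ≥ 0 for all k ≥ 1, each d^k satisfies ψ_{x^k}(d^k) < 0, and each t_k satisfies the strong Wolfe conditions at x^k along d^k, then liminf_{k→∞} ‖v(x^k)‖ = 0. -/

import Mathlib

open scoped BigOperators

noncomputable def pd (n : ℕ) (F : EuclideanSpace ℝ (Fin n) → ℝ)
    (x : EuclideanSpace ℝ (Fin n)) (j : Fin n) : ℝ :=
  fderiv ℝ F x (EuclideanSpace.single j (1 : ℝ))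

noncomputable def glo (n : ℕ) (F H : EuclideanSpace ℝ (Fin n) → ℝ)
    (x : EuclideanSpace ℝ (Fin n)) (j : Fin n) : ℝ :=
  min (pd n F x j) (pd n H x j)

noncomputable def ghi (n : ℕ) (F H : EuclideanSpace ℝ (Fin n) → ℝ)
    (x : EuclideanSpace ℝ (Fin n)) (j : Fin n) : ℝ :=
  max (pd n F x j) (pd n H x j)

noncomputable def gloVec (n : ℕ) (F H : EuclideanSpace ℝ (Fin n) → ℝ)
    (x : EuclideanSpace ℝ (Fin n)) : EuclideanSpace ℝ (Fin n) :=
  WithLp.toLp 2 (fun j => glo n F H x j)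

noncomputable def ghiVec (n : ℕ) (F H : EuclideanSpace ℝ (Fin n) → ℝ)
    (x : EuclideanSpace ℝ (Fin n)) : EuclideanSpace ℝ (Fin n) :=
  WithLp.toLp 2 (fun j => ghi n F H x j)

noncomputable def psi (m n : ℕ) (Gl Gu : Fin m → EuclideanSpace ℝ (Fin n) → ℝ)
    (x v : EuclideanSpace ℝ (Fin n)) : ℝ :=
  ⨆ i : Fin m, (1 / 2 : ℝ) *
    ((∑ j : Fin n, (glo n (Gl i) (Gu i) x j + ghi n (Gl i) (Gu i) x j) * v j) +
     (∑ j : Fin n, (ghi n (Gl i) (Gu i) x j - glo n (Gl i) (Gu i) x j) * |v j|))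

def LevelSet (m n : ℕ) (Gl Gu : Fin m → EuclideanSpace ℝ (Fin n) → ℝ)
    (x0 : EuclideanSpace ℝ (Fin n)) : Set (EuclideanSpace ℝ (Fin n)) :=
  {x | ∀ i : Fin m, Gl i x ≤ Gl i x0 ∧ Gu i x ≤ Gu i x0}

def StdWolfe (m n : ℕ) (Gl Gu : Fin m → EuclideanSpace ℝ (Fin n) → ℝ)
    (ρ σ : ℝ) (x d : EuclideanSpace ℝ (Fin n)) (t : ℝ) : Prop :=
  (∀ i : Fin m,
      Gl i (x + t • d) ≤ Gl i x + ρ * t * psi m n Gl Gu x d ∧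
      Gu i (x + t • d) ≤ Gu i x + ρ * t * psi m n Gl Gu x d) ∧
  σ * psi m n Gl Gu x d ≤ psi m n Gl Gu (x + t • d) d

def StrongWolfe (m n : ℕ) (Gl Gu : Fin m → EuclideanSpace ℝ (Fin n) → ℝ)
    (ρ σ : ℝ) (x d : EuclideanSpace ℝ (Fin n)) (t : ℝ) : Prop :=
  (∀ i : Fin m,
      Gl i (x + t • d) ≤ Gl i x + ρ * t * psi m n Gl Gu x d ∧
      Gu i (x + t • d) ≤ Gu i x + ρ * t * psi m n Gl Gu x d) ∧
  |psi m n Gl Gu (x + t • d) d| ≤ σ * |psi m n Gl Gu x d|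

def AssumptionA1 (m n : ℕ) (Gl Gu : Fin m → EuclideanSpace ℝ (Fin n) → ℝ)
    (x0 : EuclideanSpace ℝ (Fin n)) : Prop :=
  ∀ i : Fin m, ∃ L : ℝ, 0 < L ∧
    ∀ y ∈ LevelSet m n Gl Gu x0, ∀ z ∈ LevelSet m n Gl Gu x0,
      ‖gloVec n (Gl i) (Gu i) y - gloVec n (Gl i) (Gu i) z‖ ≤ L * ‖y - z‖ ∧
      ‖ghiVec n (Gl i) (Gu i) y - ghiVec n (Gl i) (Gu i) z‖ ≤ L * ‖y - z‖

def AssumptionA2 (m n : ℕ) (Gl Gu : Fin m → EuclideanSpace ℝ (Fin n) → ℝ)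
    (x0 : EuclideanSpace ℝ (Fin n)) : Prop :=
  ∀ y : ℕ → EuclideanSpace ℝ (Fin n),
    (∀ k, y k ∈ LevelSet m n Gl Gu x0) →
    (∀ (i : Fin m) (k : ℕ), Gl i (y (k+1)) ≤ Gl i (y k) ∧ Gu i (y (k+1)) ≤ Gu i (y k)) →
    ∀ i : Fin m, (∃ Cl : ℝ, ∀ k, Cl ≤ Gl i (y k)) ∧ (∃ Cu : ℝ, ∀ k, Cu ≤ Gu i (y k))

noncomputable def phi (m n : ℕ) (Gl Gu : Fin m → EuclideanSpace ℝ (Fin n) → ℝ)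
    (i : Fin m) (x v : EuclideanSpace ℝ (Fin n)) : ℝ :=
  (1 / 2 : ℝ) *
    ((∑ j : Fin n, (glo n (Gl i) (Gu i) x j + ghi n (Gl i) (Gu i) x j) * v j) +
     (∑ j : Fin n, (ghi n (Gl i) (Gu i) x j - glo n (Gl i) (Gu i) x j) * |v j|))

lemma psi_eq (m n : ℕ) (Gl Gu : Fin m → EuclideanSpace ℝ (Fin n) → ℝ) (x v : EuclideanSpace ℝ (Fin n)) :
    psi m n Gl Gu x v = ⨆ i, phi m n Gl Gu i x v := rfl

lemma phi_le_psi (m n : ℕ) (Gl Gu : Fin m → EuclideanSpace ℝ (Fin n) → ℝ)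
    (i : Fin m) (x v : EuclideanSpace ℝ (Fin n)) :
    phi m n Gl Gu i x v ≤ psi m n Gl Gu x v := by
  rw [psi_eq]
  exact le_ciSup (f := fun i => phi m n Gl Gu i x v) (Set.Finite.bddAbove (Set.finite_range _)) i

lemma psi_le (m n : ℕ) (hm : 0 < m) (Gl Gu : Fin m → EuclideanSpace ℝ (Fin n) → ℝ)
    {x v : EuclideanSpace ℝ (Fin n)} {a : ℝ} (h : ∀ i, phi m n Gl Gu i x v ≤ a) :
    psi m n Gl Gu x v ≤ a := by
  haveI : Nonempty (Fin m) := ⟨⟨0, hm⟩⟩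
  exact ciSup_le h

lemma phi_zero (m n : ℕ) (Gl Gu : Fin m → EuclideanSpace ℝ (Fin n) → ℝ)
    (i : Fin m) (x : EuclideanSpace ℝ (Fin n)) :
    phi m n Gl Gu i x 0 = 0 := by
  simp [phi]

lemma psi_zero (m n : ℕ) (hm : 0 < m) (Gl Gu : Fin m → EuclideanSpace ℝ (Fin n) → ℝ)
    (x : EuclideanSpace ℝ (Fin n)) :
    psi m n Gl Gu x 0 = 0 := by
  haveI : Nonempty (Fin m) := ⟨⟨0, hm⟩⟩
  rw [psi_eq]
  simp only [phi_zero]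
  exact ciSup_const

lemma glo_le_ghi (n : ℕ) (F H : EuclideanSpace ℝ (Fin n) → ℝ) (x : EuclideanSpace ℝ (Fin n)) (j : Fin n) :
    glo n F H x j ≤ ghi n F H x j := min_le_max

lemma phi_add (m n : ℕ) (Gl Gu : Fin m → EuclideanSpace ℝ (Fin n) → ℝ)
    (i : Fin m) (x u v : EuclideanSpace ℝ (Fin n)) :
    phi m n Gl Gu i x (u + v) ≤ phi m n Gl Gu i x u + phi m n Gl Gu i x v := by
  have h1 : ∀ j : Fin n, (u + v) j = u j + v j := fun j => rfl
  have h2 : ∀ j : Fin n,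
      (ghi n (Gl i) (Gu i) x j - glo n (Gl i) (Gu i) x j) * |(u + v) j| ≤
      (ghi n (Gl i) (Gu i) x j - glo n (Gl i) (Gu i) x j) * |u j| +
      (ghi n (Gl i) (Gu i) x j - glo n (Gl i) (Gu i) x j) * |v j| := by
    intro j
    rw [← mul_add]
    refine mul_le_mul_of_nonneg_left ?_ (by linarith [glo_le_ghi n (Gl i) (Gu i) x j])
    rw [h1]; exact abs_add_le _ _
  have hsum := Finset.sum_le_sum (fun j (_ : j ∈ Finset.univ) => h2 j)
  simp only [phi, h1, mul_add, Finset.sum_add_distrib] at *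
  linarith [hsum]

lemma phi_smul (m n : ℕ) (Gl Gu : Fin m → EuclideanSpace ℝ (Fin n) → ℝ)
    (i : Fin m) (x v : EuclideanSpace ℝ (Fin n)) {c : ℝ} (hc : 0 ≤ c) :
    phi m n Gl Gu i x (c • v) = c * phi m n Gl Gu i x v := by
  have h1 : ∀ j : Fin n, (c • v) j = c * v j := fun j => rfl
  simp only [phi, h1, abs_mul, abs_of_nonneg hc]
  have e1 : ∑ j : Fin n, (glo n (Gl i) (Gu i) x j + ghi n (Gl i) (Gu i) x j) * (c * v j)
      = c * ∑ j : Fin n, (glo n (Gl i) (Gu i) x j + ghi n (Gl i) (Gu i) x j) * v j := by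
    rw [Finset.mul_sum]; exact Finset.sum_congr rfl (fun j _ => by ring)
  have e2 : ∑ j : Fin n, (ghi n (Gl i) (Gu i) x j - glo n (Gl i) (Gu i) x j) * (c * |v j|)
      = c * ∑ j : Fin n, (ghi n (Gl i) (Gu i) x j - glo n (Gl i) (Gu i) x j) * |v j| := by
    rw [Finset.mul_sum]; exact Finset.sum_congr rfl (fun j _ => by ring)
  rw [e1, e2]; ring
lemma psi_subadd (m n : ℕ) (hm : 0 < m) (Gl Gu : Fin m → EuclideanSpace ℝ (Fin n) → ℝ)
    (x u v : EuclideanSpace ℝ (Fin n)) :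
    psi m n Gl Gu x (u + v) ≤ psi m n Gl Gu x u + psi m n Gl Gu x v := by
  refine psi_le m n hm Gl Gu (fun i => ?_)
  calc phi m n Gl Gu i x (u + v) ≤ phi m n Gl Gu i x u + phi m n Gl Gu i x v :=
        phi_add m n Gl Gu i x u v
    _ ≤ _ := add_le_add (phi_le_psi m n Gl Gu i x u) (phi_le_psi m n Gl Gu i x v)

lemma psi_smul_le (m n : ℕ) (hm : 0 < m) (Gl Gu : Fin m → EuclideanSpace ℝ (Fin n) → ℝ)
    (x v : EuclideanSpace ℝ (Fin n)) {c : ℝ} (hc : 0 ≤ c) :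
    psi m n Gl Gu x (c • v) ≤ c * psi m n Gl Gu x v := by
  refine psi_le m n hm Gl Gu (fun i => ?_)
  rw [phi_smul m n Gl Gu i x v hc]
  exact mul_le_mul_of_nonneg_left (phi_le_psi m n Gl Gu i x v) hc

lemma sum_mul_le_norm (n : ℕ) (a b : EuclideanSpace ℝ (Fin n)) :
    ∑ j : Fin n, a j * b j ≤ ‖a‖ * ‖b‖ := by
  have h := real_inner_le_norm b a
  rw [PiLp.inner_apply, mul_comm ‖b‖] at h
  simpa using h

lemma sum_mul_abs_le_norm (n : ℕ) (a v : EuclideanSpace ℝ (Fin n)) :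
    ∑ j : Fin n, a j * |v j| ≤ ‖a‖ * ‖v‖ := by
  obtain ⟨w, hw⟩ : ∃ w : EuclideanSpace ℝ (Fin n), ∀ j, w j = |v j| :=
    ⟨(WithLp.equiv 2 _).symm fun j => |v j|, fun j => rfl⟩
  have h1 := sum_mul_le_norm n a w
  have h2 : ‖w‖ = ‖v‖ := by
    rw [EuclideanSpace.norm_eq, EuclideanSpace.norm_eq]
    exact congrArg Real.sqrt (Finset.sum_congr rfl fun j _ => by
      rw [hw]; simp [Real.norm_eq_abs])
  simp only [hw] at h1
  rwa [h2] at h1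

lemma psi_lip (m n : ℕ) (hm : 0 < m) (Gl Gu : Fin m → EuclideanSpace ℝ (Fin n) → ℝ)
    (x y v : EuclideanSpace ℝ (Fin n)) {C : ℝ}
    (h : ∀ i : Fin m,
      ‖gloVec n (Gl i) (Gu i) x - gloVec n (Gl i) (Gu i) y‖ ≤ C * ‖x - y‖ ∧
      ‖ghiVec n (Gl i) (Gu i) x - ghiVec n (Gl i) (Gu i) y‖ ≤ C * ‖x - y‖) :
    psi m n Gl Gu x v ≤ psi m n Gl Gu y v + 2 * C * ‖x - y‖ * ‖v‖ := by
  refine psi_le m n hm Gl Gu (fun i => ?_)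
  have key : phi m n Gl Gu i x v ≤ phi m n Gl Gu i y v + 2 * C * ‖x - y‖ * ‖v‖ := by
    set gx := gloVec n (Gl i) (Gu i) x with hgx
    set gy := gloVec n (Gl i) (Gu i) y with hgy
    set hx := ghiVec n (Gl i) (Gu i) x with hhx
    set hy := ghiVec n (Gl i) (Gu i) y with hhy
    have e1 : ∑ j : Fin n, (gx - gy) j * v j ≤ C * ‖x - y‖ * ‖v‖ := by
      calc ∑ j : Fin n, (gx - gy) j * v j ≤ ‖gx - gy‖ * ‖v‖ := sum_mul_le_norm n _ v
        _ ≤ C * ‖x - y‖ * ‖v‖ := mul_le_mul_of_nonneg_right (h i).1 (norm_nonneg v)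
    have e2 : ∑ j : Fin n, (hx - hy) j * v j ≤ C * ‖x - y‖ * ‖v‖ := by
      calc ∑ j : Fin n, (hx - hy) j * v j ≤ ‖hx - hy‖ * ‖v‖ := sum_mul_le_norm n _ v
        _ ≤ C * ‖x - y‖ * ‖v‖ := mul_le_mul_of_nonneg_right (h i).2 (norm_nonneg v)
    have e3 : ∑ j : Fin n, (hx - hy) j * |v j| ≤ C * ‖x - y‖ * ‖v‖ := by
      calc ∑ j : Fin n, (hx - hy) j * |v j| ≤ ‖hx - hy‖ * ‖v‖ := sum_mul_abs_le_norm n _ v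
        _ ≤ C * ‖x - y‖ * ‖v‖ := mul_le_mul_of_nonneg_right (h i).2 (norm_nonneg v)
    have e4 : ∑ j : Fin n, (gy - gx) j * |v j| ≤ C * ‖x - y‖ * ‖v‖ := by
      have hnorm : ‖gy - gx‖ = ‖gx - gy‖ := norm_sub_rev _ _
      calc ∑ j : Fin n, (gy - gx) j * |v j| ≤ ‖gy - gx‖ * ‖v‖ := sum_mul_abs_le_norm n _ v
        _ ≤ C * ‖x - y‖ * ‖v‖ := by
            rw [hnorm]; exact mul_le_mul_of_nonneg_right (h i).1 (norm_nonneg v)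
    have happ1 : ∀ j : Fin n, (gx - gy) j = gx j - gy j := fun j => rfl
    have happ2 : ∀ j : Fin n, (hx - hy) j = hx j - hy j := fun j => rfl
    have happ3 : ∀ j : Fin n, (gy - gx) j = gy j - gx j := fun j => rfl
    have hgxj : ∀ j : Fin n, gx j = glo n (Gl i) (Gu i) x j := fun j => by simp [hgx, gloVec]
    have hgyj : ∀ j : Fin n, gy j = glo n (Gl i) (Gu i) y j := fun j => by simp [hgy, gloVec]
    have hhxj : ∀ j : Fin n, hx j = ghi n (Gl i) (Gu i) x j := fun j => by simp [hhx, ghiVec]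
    have hhyj : ∀ j : Fin n, hy j = ghi n (Gl i) (Gu i) y j := fun j => by simp [hhy, ghiVec]
    simp only [happ1, happ2, happ3, hgxj, hgyj, hhxj, hhyj, sub_mul,
      Finset.sum_sub_distrib] at e1 e2 e3 e4
    simp only [phi, add_mul, sub_mul, Finset.sum_add_distrib, Finset.sum_sub_distrib]
    linarith
  exact le_trans key (by linarith [phi_le_psi m n Gl Gu i y v])
set_option maxHeartbeats 1000000 in
theorem general_convergence_strong_wolfe (m n : ℕ) (hm : 0 < m) (hn : 0 < n)
    (Gl Gu : Fin m → EuclideanSpace ℝ (Fin n) → ℝ)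
    (hGl : ∀ i, ContDiff ℝ 1 (Gl i)) (hGu : ∀ i, ContDiff ℝ 1 (Gu i))
    (hle : ∀ (i : Fin m) (x : EuclideanSpace ℝ (Fin n)), Gl i x ≤ Gu i x)
    (vv : EuclideanSpace ℝ (Fin n) → EuclideanSpace ℝ (Fin n))
    (hvmin : ∀ y w : EuclideanSpace ℝ (Fin n),
      psi m n Gl Gu y (vv y) + (1/2) * ‖vv y‖^2 ≤ psi m n Gl Gu y w + (1/2) * ‖w‖^2)
    (ρ σ : ℝ) (hρ : 0 < ρ) (hρσ : ρ < σ) (hσ : σ < 1)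
    (x d : ℕ → EuclideanSpace ℝ (Fin n)) (t : ℕ → ℝ) (β : ℕ → ℝ)
    (hx : ∀ k : ℕ, x (k+1) = x k + t k • d k)
    (ht : ∀ k : ℕ, 0 < t k)
    (hd0 : d 0 = vv (x 0))
    (hdk : ∀ k : ℕ, d (k+1) = vv (x (k+1)) + β (k+1) • d k)
    (hvne : ∀ k : ℕ, vv (x k) ≠ 0)
    (hA1 : AssumptionA1 m n Gl Gu (x 0))
    (hA2 : AssumptionA2 m n Gl Gu (x 0))
    (hdiv : ¬ Summable (fun k : ℕ => 1 / ‖d k‖^2))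
    (hβ : ∀ k : ℕ, 0 ≤ β (k+1))
    (hdesc : ∀ k : ℕ, psi m n Gl Gu (x k) (d k) < 0)
    (hw : ∀ k : ℕ, StrongWolfe m n Gl Gu ρ σ (x k) (d k) (t k)) :
    Filter.liminf (fun k : ℕ => ‖vv (x k)‖) Filter.atTop = 0 := by
  haveI : Nonempty (Fin m) := ⟨⟨0, hm⟩⟩
  have hσ0 : 0 < σ := lt_trans hρ hρσ
  -- estimate on vv
  have hv2 : ∀ y : EuclideanSpace ℝ (Fin n),
      psi m n Gl Gu y (vv y) ≤ -(1/2) * ‖vv y‖^2 := by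
    intro y
    have h0 := hvmin y 0
    rw [psi_zero m n hm] at h0
    simp only [norm_zero] at h0
    nlinarith [h0]
  -- Lipschitz constant
  choose L hL using hA1
  set C : ℝ := ∑ i : Fin m, L i with hCdef
  have hCpos : 0 < C :=
    Finset.sum_pos (fun i _ => (hL i).1) ⟨⟨0, hm⟩, Finset.mem_univ _⟩
  have hLC : ∀ i, L i ≤ C := fun i =>
    Finset.single_le_sum (fun i _ => le_of_lt (hL i).1) (Finset.mem_univ i)
  -- monotonicity and level set
  have hdec : ∀ (k : ℕ) (i : Fin m),
      Gl i (x (k+1)) ≤ Gl i (x k) ∧ Gu i (x (k+1)) ≤ Gu i (x k) := by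
    intro k i
    have hw1 := (hw k).1 i
    have hneg : ρ * t k * psi m n Gl Gu (x k) (d k) < 0 :=
      mul_neg_of_pos_of_neg (mul_pos hρ (ht k)) (hdesc k)
    rw [hx k]
    exact ⟨by linarith [hw1.1], by linarith [hw1.2]⟩
  have hlev : ∀ k, x k ∈ LevelSet m n Gl Gu (x 0) := by
    intro k
    induction k with
    | zero => intro i; exact ⟨le_refl _, le_refl _⟩
    | succ k ih => intro i; exact ⟨le_trans (hdec k i).1 (ih i).1, le_trans (hdec k i).2 (ih i).2⟩
  -- s
  set s : ℕ → ℝ := fun k => -(psi m n Gl Gu (x k) (d k)) with hsdef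
  set u : ℕ → ℝ := fun k => s k / ‖d k‖ with hudef
  have hpsis : ∀ k, psi m n Gl Gu (x k) (d k) = -(s k) := fun k => by simp [hsdef]
  have hu_eq : ∀ k, u k = s k / ‖d k‖ := fun k => rfl
  clear_value s u
  have hspos : ∀ k, 0 < s k := fun k => by
    rw [← neg_neg (s k), ← hpsis k] at *; exact neg_pos.mpr (hdesc k)
  have hdne : ∀ k, (0:ℝ) < ‖d k‖ := by
    intro k
    rcases eq_or_ne (d k) 0 with h | h
    · exfalso
      have := hdesc k
      rw [h, psi_zero m n hm] at this
      exact lt_irrefl 0 this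
    · exact norm_pos_iff.mpr h
  -- Zoutendijk part 1 : Summable (t k * s k)
  obtain ⟨⟨Cl, hCl⟩, -⟩ := hA2 x hlev (fun i k => hdec k i) ⟨0, hm⟩
  have hsum1 : Summable (fun k => t k * s k) := by
    have htele : ∀ N, ρ * ∑ k ∈ Finset.range N, t k * s k
        ≤ Gl ⟨0, hm⟩ (x 0) - Gl ⟨0, hm⟩ (x N) := by
      intro N
      induction N with
      | zero => simp
      | succ N ih =>
        have hw1 := ((hw N).1 ⟨0, hm⟩).1
        rw [← hx N] at hw1
        rw [Finset.sum_range_succ, mul_add]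
        have : ρ * (t N * s N) = -(ρ * t N * psi m n Gl Gu (x N) (d N)) := by
          rw [hpsis N]; ring
        linarith
    apply summable_of_sum_range_le (c := (Gl ⟨0, hm⟩ (x 0) - Cl) / ρ)
    · intro k; exact mul_nonneg (le_of_lt (ht k)) (le_of_lt (hspos k))
    · intro N
      rw [le_div_iff₀ hρ]
      have := htele N
      have := hCl N
      linarith
  -- Lipschitz of psi between iterates
  have hlip : ∀ (k : ℕ) (v : EuclideanSpace ℝ (Fin n)),
      psi m n Gl Gu (x (k+1)) v ≤ psi m n Gl Gu (x k) v + 2 * C * (t k * ‖d k‖) * ‖v‖ := by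
    intro k v
    have h := psi_lip m n hm Gl Gu (x (k+1)) (x k) v (C := C) (fun i => ?_)
    · have hnorm : ‖x (k+1) - x k‖ = t k * ‖d k‖ := by
        rw [hx k, add_sub_cancel_left, norm_smul, Real.norm_eq_abs, abs_of_pos (ht k)]
      rwa [hnorm] at h
    · have h2 := (hL i).2 (x (k+1)) (hlev (k+1)) (x k) (hlev k)
      have hmul : L i * ‖x (k+1) - x k‖ ≤ C * ‖x (k+1) - x k‖ :=
        mul_le_mul_of_nonneg_right (hLC i) (norm_nonneg _)
      exact ⟨le_trans h2.1 hmul, le_trans h2.2 hmul⟩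
  -- step length lower bound
  have hstep : ∀ k, (1 - σ) * s k ≤ 2 * C * (t k * ‖d k‖ ^ 2) := by
    intro k
    have habs : |psi m n Gl Gu (x k) (d k)| = s k := by
      rw [abs_of_neg (hdesc k), hpsis k, neg_neg]
    have hw2 := (hw k).2
    rw [← hx k, habs] at hw2
    have hlow : -(σ * s k) ≤ psi m n Gl Gu (x (k+1)) (d k) := by
      have := abs_le.mp hw2
      linarith [this.1]
    have hup := hlip k (d k)
    have : psi m n Gl Gu (x k) (d k) = -(s k) := hpsis k
    nlinarith [hup, hlow, this]
  -- Zoutendijk part 2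
  have hupos : ∀ k, 0 < u k := fun k => by
    rw [hu_eq k]; exact div_pos (hspos k) (hdne k)
  have husq : Summable (fun k => u k ^ 2) := by
    refine Summable.of_nonneg_of_le (g := fun k => u k ^ 2)
      (f := fun k => (2 * C / (1 - σ)) * (t k * s k)) (fun k => sq_nonneg _) ?_ (hsum1.mul_left _)
    intro k
    have hd2 : (0:ℝ) < ‖d k‖ ^ 2 := pow_pos (hdne k) 2
    have hst := hstep k
    have h1σ : (0:ℝ) < 1 - σ := by linarith
    show u k ^ 2 ≤ 2 * C / (1 - σ) * (t k * s k)
    rw [hu_eq k]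
    rw [div_pow, div_le_iff₀ hd2]
    have key : 2 * C / (1 - σ) * (t k * s k) * ‖d k‖ ^ 2
        = 2 * C * (t k * ‖d k‖ ^ 2) * s k / (1 - σ) := by ring
    rw [key, le_div_iff₀ h1σ]
    nlinarith [mul_le_mul_of_nonneg_right hst (le_of_lt (hspos k))]
  -- u tends to zero
  have hu0 : Filter.Tendsto u Filter.atTop (nhds 0) := by
    have h2 := husq.tendsto_atTop_zero
    have h3 : Filter.Tendsto (fun k => Real.sqrt (u k ^ 2)) Filter.atTop (nhds 0) := by
      have := (Real.continuous_sqrt.tendsto 0).comp h2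
      simpa [Function.comp_def] using this
    have : ∀ k, Real.sqrt (u k ^ 2) = u k := fun k => Real.sqrt_sq (le_of_lt (hupos k))
    simpa [this] using h3
  -- main claim
  have claim : ∀ γ : ℝ, 0 < γ → ¬ (∀ᶠ k in Filter.atTop, γ ≤ ‖vv (x k)‖) := by
    intro γ hγ hev
    obtain ⟨K0, hK0⟩ := Filter.eventually_atTop.mp hev
    have hσu : ∀ᶠ k in Filter.atTop, σ * u k < γ / 4 := by
      have htend : Filter.Tendsto (fun k => σ * u k) Filter.atTop (nhds 0) := by
        simpa using hu0.const_mul σ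
      exact htend.eventually_lt_const (by positivity)
    obtain ⟨K1, hK1⟩ := Filter.eventually_atTop.mp hσu
    set K := max K0 K1 with hK
    have hkey : ∀ l, K ≤ l →
        1 / ‖d (l+1)‖^2 ≤ 32 / γ^4 * (u (l+1)^2 + σ^2 * u l^2) := by
      intro l hl
      have hgv : γ ≤ ‖vv (x (l+1))‖ :=
        hK0 _ (le_trans (le_max_left _ _) (le_trans hl (Nat.le_succ l)))
      have hσul : σ * u l < γ / 4 := hK1 l (le_trans (le_max_right _ _) hl)
      set M := s (l+1) + σ * (β (l+1) * s l) with hM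
      have hwl := (hw l).2
      rw [← hx l, abs_of_neg (hdesc l)] at hwl
      have hsl : -(psi m n Gl Gu (x l) (d l)) = s l := by rw [hpsis l, neg_neg]
      have hpsid : psi m n Gl Gu (x (l+1)) (d l) ≤ σ * s l := by
        have h1 := (abs_le.mp hwl).2
        rw [hsl] at h1
        exact h1
      have hsub : psi m n Gl Gu (x (l+1)) (d (l+1)) ≤
          psi m n Gl Gu (x (l+1)) (vv (x (l+1))) +
            β (l+1) * psi m n Gl Gu (x (l+1)) (d l) := by
        rw [hdk l]
        refine le_trans (psi_subadd m n hm Gl Gu _ _ _) ?_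
        exact add_le_add le_rfl (psi_smul_le m n hm Gl Gu _ _ (hβ l))
      have h3 : psi m n Gl Gu (x (l+1)) (d (l+1)) = -(s (l+1)) := hpsis (l+1)
      have hMv : ‖vv (x (l+1))‖^2 / 2 ≤ M := by
        have h1 := hv2 (x (l+1))
        have h2 : β (l+1) * psi m n Gl Gu (x (l+1)) (d l) ≤ β (l+1) * (σ * s l) :=
          mul_le_mul_of_nonneg_left hpsid (hβ l)
        rw [h3] at hsub
        rw [hM]
        linarith [hsub, h1, h2]
      have hMγ : γ^2/2 ≤ M := by nlinarith [hgv, hMv, norm_nonneg (vv (x (l+1)))]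
      have hMpos : (0:ℝ) < M := lt_of_lt_of_le (by positivity) hMγ
      have hs_eq : ∀ k, s k = u k * ‖d k‖ := fun k => by
        rw [hu_eq k, div_mul_cancel₀ _ (ne_of_gt (hdne k))]
      have hβd : β (l+1) * ‖d l‖ ≤ ‖d (l+1)‖ + ‖vv (x (l+1))‖ := by
        have hsm : β (l+1) • d l = d (l+1) - vv (x (l+1)) := by rw [hdk l]; abel
        calc β (l+1) * ‖d l‖ = ‖β (l+1) • d l‖ := by
              rw [norm_smul, Real.norm_eq_abs, abs_of_nonneg (hβ l)]
          _ = ‖d (l+1) - vv (x (l+1))‖ := by rw [hsm]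
          _ ≤ ‖d (l+1)‖ + ‖vv (x (l+1))‖ := norm_sub_le _ _
      have hvM : ‖vv (x (l+1))‖ ≤ 2 * M / γ := by
        rw [le_div_iff₀ hγ]
        nlinarith [hgv, hMv, norm_nonneg (vv (x (l+1)))]
      have hMle : M ≤ (u (l+1) + σ * u l) * ‖d (l+1)‖ + σ * u l * ‖vv (x (l+1))‖ := by
        have e1 := hs_eq (l+1)
        have e2 := hs_eq l
        have h4 := mul_le_mul_of_nonneg_left hβd
          (mul_nonneg (le_of_lt hσ0) (le_of_lt (hupos l)))
        rw [hM, e1, e2]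
        nlinarith [h4]
      have hhalf : γ^2/4 ≤ (u (l+1) + σ * u l) * ‖d (l+1)‖ := by
        have h1 : σ * u l * ‖vv (x (l+1))‖ ≤ σ * u l * (2*M/γ) :=
          mul_le_mul_of_nonneg_left hvM (mul_nonneg (le_of_lt hσ0) (le_of_lt (hupos l)))
        have h2 : σ * u l * (2*M/γ) ≤ (γ/4) * (2*M/γ) :=
          mul_le_mul_of_nonneg_right (le_of_lt hσul) (by positivity)
        have h5 : (γ/4) * (2*M/γ) = M/2 := by field_simp; ring
        linarith [hMle, h1, h2, hMγ]
      have hApos : (0:ℝ) < u (l+1) + σ * u l := by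
        have := hupos (l+1); have := hupos l; nlinarith
      have hinv : 1 / ‖d (l+1)‖ ≤ (u (l+1) + σ * u l) * (4/γ^2) := by
        rw [div_le_iff₀ (hdne (l+1))]
        have hq : (0:ℝ) < 4/γ^2 := by positivity
        have := mul_le_mul_of_nonneg_left hhalf (le_of_lt hq)
        calc (1:ℝ) = 4/γ^2 * (γ^2/4) := by field_simp
          _ ≤ 4/γ^2 * ((u (l+1) + σ * u l) * ‖d (l+1)‖) := by linarith
          _ = (u (l+1) + σ * u l) * (4/γ^2) * ‖d (l+1)‖ := by ring
      have hsq : 1/‖d (l+1)‖^2 ≤ ((u (l+1) + σ*u l)*(4/γ^2))^2 := by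
        have h0 : (0:ℝ) ≤ 1/‖d (l+1)‖ := by positivity
        calc 1/‖d (l+1)‖^2 = (1/‖d (l+1)‖)^2 := by rw [div_pow, one_pow]
          _ ≤ _ := pow_le_pow_left₀ h0 hinv 2
      refine le_trans hsq ?_
      have hγ4 : (0:ℝ) < γ^4 := by positivity
      have hAB : 16 * (u (l+1) + σ*u l)^2 ≤ 32 * (u (l+1)^2 + σ^2 * u l^2) := by
        nlinarith [sq_nonneg (u (l+1) - σ * u l)]
      calc ((u (l+1) + σ*u l)*(4/γ^2))^2 = 16 * (u (l+1) + σ*u l)^2 / γ^4 := by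
            field_simp; ring
        _ ≤ 32 * (u (l+1)^2 + σ^2 * u l^2) / γ^4 := by
            rw [div_le_div_iff₀ hγ4 hγ4]
            nlinarith [mul_le_mul_of_nonneg_right hAB (le_of_lt hγ4)]
        _ = 32/γ^4 * (u (l+1)^2 + σ^2 * u l^2) := by ring
    have hsum2 : Summable (fun j : ℕ => 1 / ‖d (j + (K+1))‖^2) := by
      refine Summable.of_nonneg_of_le
        (f := fun j => 32/γ^4 * (u (j+(K+1))^2 + σ^2 * u (j+K)^2))
        (fun j => by positivity) (fun j => ?_) ?_
      · show 1 / ‖d ((j + K) + 1)‖^2 ≤ 32/γ^4 * (u ((j+K)+1)^2 + σ^2 * u (j+K)^2)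
        exact hkey (j + K) (Nat.le_add_left _ _)
      · have h1 : Summable (fun j => u (j + (K+1)) ^ 2) := (summable_nat_add_iff (f := fun k => u k ^ 2) (K+1)).2 husq
        have h2 : Summable (fun j => u (j + K) ^ 2) := (summable_nat_add_iff (f := fun k => u k ^ 2) K).2 husq
        exact (h1.add (h2.mul_left (σ^2))).mul_left (32/γ^4)
    exact hdiv ((summable_nat_add_iff (f := fun k : ℕ => 1 / ‖d k‖^2) (K+1)).1 hsum2)
  -- conclusion
  rw [Filter.liminf_eq]
  have hset : {a : ℝ | ∀ᶠ k in Filter.atTop, a ≤ ‖vv (x k)‖} = Set.Iic 0 := by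
    ext a
    simp only [Set.mem_setOf_eq, Set.mem_Iic]
    constructor
    · intro ha
      by_contra hcon
      push_neg at hcon
      exact claim a hcon ha
    · intro ha
      exact Filter.Eventually.of_forall (fun k => le_trans ha (norm_nonneg _))
  rw [hset, csSup_Iic]
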